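/- Under the diffeomorphism of the critical set onto L_{Y,a} given by pⱼ = aⱼ/fⱼ, the Hessian of the master function equals Hess = (−1)^k Σ_{I, |I|=k} d_I² ∏_{i∈I} pᵢ²/aᵢ, and consequently for any k-subset I with d_I ≠ 0, Hess = (−1)^n d_I² Jac_I ∏_{j=1}^n pⱼ²/aⱼ. In particular the ratio of Hess and d_I² Jac_I never vanishes on L_{Y,a}. -/

import Mathlib

/-- The span `Y ⊂ ℂⁿ` of the rows `bⁱ = (bⁱ₁, …, bⁱₙ)`. -/
noncomputable def rowSpan (n k : ℕ) (b : Fin n → Fin k → ℂ) :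
    Submodule ℂ (Fin n → ℂ) :=
  Submodule.span ℂ (Set.range fun i : Fin k => fun j : Fin n => b j i)

/-- The annihilator `Y^⊥ ⊂ (ℂⁿ)* ≅ ℂⁿ` of a subspace `Y ⊂ ℂⁿ`. -/
noncomputable def annSub (n : ℕ) (Y : Submodule ℂ (Fin n → ℂ)) :
    Submodule ℂ (Fin n → ℂ) where
  carrier := {β | ∀ y ∈ Y, ∑ j, β j * y j = 0}
  add_mem' := by
    intro β γ hβ hγ y hy
    have h1 := hβ y hy
    have h2 := hγ y hy
    simp only [Pi.add_apply, add_mul]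
    rw [Finset.sum_add_distrib, h1, h2, add_zero]
  zero_mem' := by intro y hy; simp
  smul_mem' := by
    intro c β hβ y hy
    have h1 := hβ y hy
    simp only [Pi.smul_apply, smul_eq_mul, mul_assoc]
    rw [← Finset.mul_sum, h1, mul_zero]

section Helpers
open Matrix Finset

lemma sum_ordIso {M : Type*} [AddCommMonoid M] {k n : ℕ} (s : Finset (Fin n)) (h : s.card = k)
    (f : Fin n → M) : ∑ l : Fin k, f ((s.orderIsoOfFin h l : Fin n)) = ∑ j ∈ s, f j := by
  rw [← Finset.sum_coe_sort s f]
  exact Equiv.sum_comp ((s.orderIsoOfFin h).toEquiv) (fun x => f ↑x)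

lemma prod_ordIso {M : Type*} [CommMonoid M] {k n : ℕ} (s : Finset (Fin n)) (h : s.card = k)
    (f : Fin n → M) : ∏ l : Fin k, f ((s.orderIsoOfFin h l : Fin n)) = ∏ j ∈ s, f j := by
  rw [← Finset.prod_coe_sort s f]
  exact Equiv.prod_comp ((s.orderIsoOfFin h).toEquiv) (fun x => f ↑x)

section Helpers
open Matrix Finset

lemma det_mul_expand {k n : ℕ} (M : Matrix (Fin k) (Fin n) ℂ) (N : Matrix (Fin n) (Fin k) ℂ) :
    (M * N).det = ∑ r : Fin k → Fin n, (∏ i, M i (r i)) * (N.submatrix r id).det := by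
  have h0 : (M * N) = Matrix.of (fun i => ∑ x : Fin n, M i x • N x) := by
    ext i j
    simp [Matrix.mul_apply, Finset.sum_apply]
  rw [h0]
  have h1 : (Matrix.of (fun i => ∑ x : Fin n, M i x • N x)).det
      = (Matrix.detRowAlternating (R := ℂ) (n := Fin k)).toMultilinearMap
          (fun i => ∑ x : Fin n, M i x • N x) := rfl
  rw [h1, (Matrix.detRowAlternating (R := ℂ) (n := Fin k)).toMultilinearMap.map_sum
    (g := fun i x => M i x • N x)]
  refine Finset.sum_congr rfl fun r _ => ?_
  have := (Matrix.detRowAlternating (R := ℂ) (n := Fin k)).toMultilinearMap.map_smul_univ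
    (fun i => M i (r i)) (fun i => N (r i))
  exact this

lemma cb_bij {k n : ℕ} (F : (Fin k → Fin n) → ℂ) :
    ∑ p ∈ (Finset.powersetCard k (univ : Finset (Fin n))).attach ×ˢ
        (univ : Finset (Equiv.Perm (Fin k))),
      F (fun l => (p.1.1.orderIsoOfFin (Finset.mem_powersetCard.mp p.1.2).2 (p.2 l) : Fin n))
    = ∑ r ∈ univ.filter (fun r : Fin k → Fin n => Function.Injective r), F r := by
  have coe_ord : ∀ (S1 S2 : Finset (Fin n)) (h1 : S1.card = k) (h2 : S2.card = k), S1 = S2 →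
      ∀ x, ((S1.orderIsoOfFin h1 x : Fin n)) = (S2.orderIsoOfFin h2 x : Fin n) := by
    rintro S1 S2 h1 h2 rfl x; rfl
  refine Finset.sum_bij' (i := fun p _ => fun l =>
      (p.1.1.orderIsoOfFin (Finset.mem_powersetCard.mp p.1.2).2 (p.2 l) : Fin n))
    (j := fun r hr => (⟨Finset.image r univ, by
        refine Finset.mem_powersetCard.mpr ⟨Finset.subset_univ _, ?_⟩
        rw [Finset.card_image_of_injective _ (Finset.mem_filter.mp hr).2, Finset.card_univ,
          Fintype.card_fin]⟩,
      Equiv.ofBijective (fun l => ((Finset.image r univ).orderIsoOfFin (by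
        rw [Finset.card_image_of_injective _ (Finset.mem_filter.mp hr).2, Finset.card_univ,
          Fintype.card_fin])).symm ⟨r l, Finset.mem_image_of_mem r (Finset.mem_univ l)⟩)
        ((Finite.injective_iff_bijective).mp (fun x y hxy => (Finset.mem_filter.mp hr).2 (by
          have := congrArg (fun z => (((Finset.image r univ).orderIsoOfFin (by
            rw [Finset.card_image_of_injective _ (Finset.mem_filter.mp hr).2, Finset.card_univ,
              Fintype.card_fin])) z : Fin n)) hxy
          simpa using this)))))
    ?_ ?_ ?_ ?_ ?_
  · -- hi
    intro p hp
    refine Finset.mem_filter.mpr ⟨Finset.mem_univ _, ?_⟩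
    intro x y hxy
    exact p.2.injective ((p.1.1.orderIsoOfFin _).injective (Subtype.coe_injective hxy))
  · -- hj
    intro r hr
    simp [Finset.mem_product]
  · -- left_inv
    rintro ⟨T, σ⟩ hp
    have hinj : Function.Injective (fun l =>
        (T.1.orderIsoOfFin (Finset.mem_powersetCard.mp T.2).2 (σ l) : Fin n)) :=
      fun x y hxy => σ.injective ((T.1.orderIsoOfFin _).injective (Subtype.coe_injective hxy))
    have himg : Finset.image (fun l =>
        (T.1.orderIsoOfFin (Finset.mem_powersetCard.mp T.2).2 (σ l) : Fin n)) univ = T.1 := by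
      apply Finset.eq_of_subset_of_card_le
      · intro x hx
        obtain ⟨l, _, rfl⟩ := Finset.mem_image.mp hx
        exact (T.1.orderIsoOfFin _ (σ l)).2
      · rw [Finset.card_image_of_injective _ hinj, Finset.card_univ, Fintype.card_fin,
          (Finset.mem_powersetCard.mp T.2).2]
    have hcard : (Finset.image (fun l =>
        (T.1.orderIsoOfFin (Finset.mem_powersetCard.mp T.2).2 (σ l) : Fin n)) univ).card = k := by
      rw [himg, (Finset.mem_powersetCard.mp T.2).2]
    refine Prod.ext (Subtype.ext himg) ?_
    refine Equiv.ext fun l => ?_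
    set O1 := (Finset.image (fun l =>
        (T.1.orderIsoOfFin (Finset.mem_powersetCard.mp T.2).2 (σ l) : Fin n)) univ).orderIsoOfFin
        hcard with hO1
    have key : O1 (σ l) = ⟨(T.1.orderIsoOfFin (Finset.mem_powersetCard.mp T.2).2 (σ l) : Fin n),
        Finset.mem_image_of_mem _ (Finset.mem_univ l)⟩ := by
      apply Subtype.ext
      exact coe_ord _ _ hcard (Finset.mem_powersetCard.mp T.2).2 himg (σ l)
    show O1.symm ⟨_, _⟩ = σ l
    rw [← key, OrderIso.symm_apply_apply]
  · -- right_inv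
    intro r hr
    funext l
    simp
  · intro p hp; rfl





lemma cauchy_binet {k n : ℕ} (M : Matrix (Fin k) (Fin n) ℂ) (N : Matrix (Fin n) (Fin k) ℂ) :
    (M * N).det = ∑ T ∈ (Finset.powersetCard k (univ : Finset (Fin n))).attach,
      (M.submatrix id (fun l => ((T.1.orderIsoOfFin (Finset.mem_powersetCard.mp T.2).2) l : Fin n))).det
      * (N.submatrix (fun l => ((T.1.orderIsoOfFin (Finset.mem_powersetCard.mp T.2).2) l : Fin n)) id).det := by
  rw [det_mul_expand]
  have hzero : ∀ r ∈ (univ : Finset (Fin k → Fin n)),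
      r ∉ univ.filter (fun r : Fin k → Fin n => Function.Injective r) →
      (∏ i, M i (r i)) * (N.submatrix r id).det = 0 := by
    intro r _ hr
    have : ¬ Function.Injective r := by simpa using hr
    rw [Function.not_injective_iff] at this
    obtain ⟨x, y, hxy, hne⟩ := this
    have : (N.submatrix r id).det = 0 := by
      apply Matrix.det_zero_of_row_eq hne
      funext j; simp [hxy]
    rw [this, mul_zero]
  rw [← Finset.sum_subset (Finset.filter_subset _ _) hzero, ← cb_bij, Finset.sum_product]
  refine Finset.sum_congr rfl fun T _ => ?_
  set o : Fin k → Fin n := fun l => ((T.1.orderIsoOfFin (Finset.mem_powersetCard.mp T.2).2) l : Fin n)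
  have step : ∀ σ : Equiv.Perm (Fin k),
      (∏ i, M i (o (σ i))) * (N.submatrix (fun l => o (σ l)) id).det
      = (Equiv.Perm.sign σ : ℤ) * (∏ i, M i (o (σ i))) * (N.submatrix o id).det := by
    intro σ
    have : (N.submatrix (fun l => o (σ l)) id) = (N.submatrix o id).submatrix σ id := rfl
    rw [this, Matrix.det_permute]
    push_cast
    ring
  rw [Finset.sum_congr rfl fun σ _ => step σ, ← Finset.sum_mul]
  congr 1
  have : (M.submatrix id o).det = ((M.submatrix id o)ᵀ).det := (Matrix.det_transpose _).symm
  rw [this, Matrix.det_apply']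
  rfl





lemma part1 {n k : ℕ} (b : Fin n → Fin k → ℂ) (a p : Fin n → ℂ) :
    Matrix.det (Matrix.of fun i l : Fin k => -(∑ j, b j i * b j l * (p j) ^ 2 / a j))
        = (-1) ^ k *
          ∑ T ∈ (Finset.powersetCard k (Finset.univ : Finset (Fin n))).attach,
            (Matrix.det (Matrix.of fun i l : Fin k =>
                b ((T.1.orderIsoOfFin (Finset.mem_powersetCard.mp T.2).2) l).1 i)) ^ 2
              * ∏ i ∈ T.1, (p i) ^ 2 / a i := by
  set M : Matrix (Fin k) (Fin n) ℂ := Matrix.of fun i j => b j i with hM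
  set N : Matrix (Fin n) (Fin k) ℂ := Matrix.of fun j l => b j l * ((p j) ^ 2 / a j) with hN
  have h0 : Matrix.of (fun i l : Fin k => -(∑ j, b j i * b j l * (p j) ^ 2 / a j)) = -(M * N) := by
    ext i l
    simp only [Matrix.of_apply, Matrix.neg_apply, Matrix.mul_apply, hM, hN, ← Finset.sum_neg_distrib]
    congr 1; funext j; ring
  rw [h0, Matrix.det_neg, Fintype.card_fin, cauchy_binet]
  congr 1
  apply Finset.sum_congr rfl
  intro T hT
  set o : Fin k → Fin n := fun l => ((T.1.orderIsoOfFin (Finset.mem_powersetCard.mp T.2).2) l : Fin n)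
  have h1 : M.submatrix id o = Matrix.of fun i l : Fin k => b (o l) i := rfl
  have h2 : (N.submatrix o id).det = (∏ l, ((p (o l)) ^ 2 / a (o l)))
      * (Matrix.of fun i l : Fin k => b (o l) i).det := by
    have h3 : N.submatrix o id = Matrix.of (fun x l : Fin k => ((p (o x)) ^ 2 / a (o x)) * ((Matrix.of fun i l : Fin k => b (o l) i)ᵀ x l)) := by
      ext x l
      simp [hN, mul_comm]
    rw [h3, Matrix.det_mul_column, Matrix.det_transpose]
  rw [h1, h2, prod_ordIso T.1 (Finset.mem_powersetCard.mp T.2).2 (fun j => (p j) ^ 2 / a j)]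
  ring

lemma part2 (n k : ℕ) (hkn : k ≤ n) (b : Fin n → Fin k → ℂ)
    (a p : Fin n → ℂ) (ha : ∀ j, a j ≠ 0) (hp : ∀ j, p j ≠ 0)
    (I : Finset (Fin n)) (hI : I.card = k)
    (hdI : Matrix.det (Matrix.of fun i l : Fin k => b ((I.orderIsoOfFin hI) l).1 i) ≠ 0)
    (u : (Fin n → ℂ) →ₗ[ℂ] ((Fin n → ℂ) × (Fin n → ℂ)))
    (hur : LinearMap.range u = (rowSpan n k b).prod (annSub n (rowSpan n k b)))
    (MA MB : Matrix (Fin n) (Fin n) ℂ)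
    (hMA : ∀ i c, MA i c
      = (u (Pi.single c 1)).1 i - a i / (p i) ^ 2 * (u (Pi.single c 1)).2 i)
    (hMB : ∀ i c, MB i c = if i ∈ I then MA i c else (u (Pi.single c 1)).2 i) :
    Matrix.det (Matrix.of fun i l : Fin k => -(∑ j, b j i * b j l * (p j) ^ 2 / a j))
        * MB.det
      = (-1) ^ n *
          (Matrix.det (Matrix.of fun i l : Fin k => b ((I.orderIsoOfFin hI) l).1 i)) ^ 2
          * MA.det * ∏ j, (p j) ^ 2 / a j := by
  classical
  set g : Fin n → ℂ := fun j => (p j) ^ 2 / a j with hgdef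
  have hg : ∀ j, g j ≠ 0 := fun j => div_ne_zero (pow_ne_zero _ (hp j)) (ha j)
  set Io := I.orderIsoOfFin hI with hIo
  -- matrices V, W
  set V : Matrix (Fin n) (Fin n) ℂ := Matrix.of fun i c => (u (Pi.single c 1)).1 i with hV
  set W : Matrix (Fin n) (Fin n) ℂ := Matrix.of fun i c => (u (Pi.single c 1)).2 i with hW
  have hMA' : ∀ i c, MA i c = V i c - (g i)⁻¹ * W i c := by
    intro i c
    rw [hMA]
    have : a i / (p i) ^ 2 = (g i)⁻¹ := by rw [hgdef]; simp [inv_div]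
    rw [this]
    rfl
  -- columns of W annihilate the b-vectors
  have hBW : ∀ (c : Fin n) (m : Fin k), ∑ j, b j m * W j c = 0 := by
    intro c m
    have h1 : (u (Pi.single c 1)) ∈ (rowSpan n k b).prod (annSub n (rowSpan n k b)) := by
      rw [← hur]; exact LinearMap.mem_range_self u _
    have h2 := h1.2 (fun j => b j m) (Submodule.subset_span ⟨m, rfl⟩)
    rw [← h2]
    apply Finset.sum_congr rfl
    intro j _
    rw [mul_comm]
    rfl
  -- the coefficient matrix C with V = B C
  have hVmem : ∀ c, (fun j => V j c) ∈ rowSpan n k b := by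
    intro c
    have h1 : (u (Pi.single c 1)) ∈ (rowSpan n k b).prod (annSub n (rowSpan n k b)) := by
      rw [← hur]; exact LinearMap.mem_range_self u _
    exact h1.1
  have hCex : ∀ c, ∃ w : Fin k → ℂ, ∀ i, V i c = ∑ m, b i m * w m := by
    intro c
    obtain ⟨w, hw⟩ := (Submodule.mem_span_range_iff_exists_fun ℂ).mp (hVmem c)
    refine ⟨w, fun i => ?_⟩
    have := congrFun hw i
    simp only [Finset.sum_apply, Pi.smul_apply, smul_eq_mul] at this
    rw [← this]
    apply Finset.sum_congr rfl
    intro m _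
    ring
  choose Cw hCw using hCex
  set C : Matrix (Fin k) (Fin n) ℂ := Matrix.of fun m c => Cw c m with hC
  have hVC : ∀ i c, V i c = ∑ m, b i m * C m c := fun i c => hCw c i

  -- reindexing sums over I
  have hsum_dite : ∀ (φ : Fin k → ℂ),
      (∑ j, if h : j ∈ I then φ (Io.symm ⟨j, h⟩) else 0) = ∑ m, φ m := by
    intro φ
    rw [← Finset.sum_subset (Finset.subset_univ I)
      (by intro x _ hx; rw [dif_neg hx])]
    rw [← sum_ordIso I hI (fun j => if h : j ∈ I then φ (Io.symm ⟨j, h⟩) else 0)]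
    apply Finset.sum_congr rfl
    intro m _
    rw [dif_pos (Io m).2]
    congr 1
    exact Io.symm_apply_apply m
  have hsum_I : ∀ (φ : Fin n → ℂ), (∑ j ∈ I, φ j) = ∑ m, φ (Io m) :=
    fun φ => (sum_ordIso I hI φ).symm
  have prod_Io : ∀ (f : Fin n → ℂ), (∏ l : Fin k, f ((Io l : Fin n))) = ∏ j ∈ I, f j :=
    fun f => prod_ordIso I hI f
  set H : Matrix (Fin k) (Fin k) ℂ :=
    Matrix.of fun i l => -(∑ j, b j i * b j l * (p j) ^ 2 / a j) with hH
  have hHg : ∀ i l, (∑ j, g j * b j i * b j l) = - H i l := by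
    intro i l
    rw [hH]
    simp only [Matrix.of_apply, neg_neg]
    apply Finset.sum_congr rfl
    intro j _
    rw [hgdef]
    ring
  set K : Matrix (Fin k) (Fin k) ℂ :=
    Matrix.of fun i l => ∑ j ∈ I, g j * b j i * b j l with hK
  set N2 : Matrix (Fin n) (Fin n) ℂ :=
    Matrix.of fun i c => if h : i ∈ I then C (Io.symm ⟨i, h⟩) c else W i c with hN2
  set LA : Matrix (Fin n) (Fin n) ℂ :=
    Matrix.of fun i j => if h : i ∈ I then g j * b j (Io.symm ⟨i, h⟩)
      else if i = j then 1 else 0 with hLA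
  set LB : Matrix (Fin n) (Fin n) ℂ :=
    Matrix.of fun i j => if h : i ∈ I then
      (if j ∈ I then -(g j) * b j (Io.symm ⟨i, h⟩) else b j (Io.symm ⟨i, h⟩))
      else if i = j then 1 else 0 with hLB
  set FA : Matrix (Fin n) (Fin n) ℂ :=
    Matrix.of fun i j => if hi : i ∈ I then
      (if hj : j ∈ I then -H (Io.symm ⟨i, hi⟩) (Io.symm ⟨j, hj⟩) else 0)
      else (if hj : j ∈ I then b i (Io.symm ⟨j, hj⟩) else if i = j then -(g i)⁻¹ else 0) with hFA
  set FB : Matrix (Fin n) (Fin n) ℂ :=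
    Matrix.of fun i j => if hi : i ∈ I then
      (if hj : j ∈ I then -K (Io.symm ⟨i, hi⟩) (Io.symm ⟨j, hj⟩) else 0)
      else (if i = j then 1 else 0) with hFB
  -- identity A : LA * MA = FA * N2
  have IA : LA * MA = FA * N2 := by
    ext i c
    rw [Matrix.mul_apply, Matrix.mul_apply]
    by_cases hi : i ∈ I
    · have hRHS : ∑ j, FA i j * N2 j c
          = ∑ m, -H (Io.symm ⟨i, hi⟩) m * C m c := by
        rw [← hsum_dite (fun m => -H (Io.symm ⟨i, hi⟩) m * C m c)]
        apply Finset.sum_congr rfl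
        intro j _
        by_cases hj : j ∈ I
        · rw [hFA, hN2]
          simp only [Matrix.of_apply, dif_pos hi, dif_pos hj]
        · rw [hFA, hN2]
          simp only [Matrix.of_apply, dif_pos hi, dif_neg hj, zero_mul]
      rw [hRHS]
      have hLj : ∀ j, LA i j * MA j c = g j * b j (Io.symm ⟨i, hi⟩) * V j c
          - b j (Io.symm ⟨i, hi⟩) * W j c := by
        intro j
        rw [hLA]
        simp only [Matrix.of_apply, dif_pos hi]
        rw [hMA' j c]
        have hgj := hg j
        field_simp
      rw [Finset.sum_congr rfl fun j _ => hLj j, Finset.sum_sub_distrib,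
        hBW c (Io.symm ⟨i, hi⟩), sub_zero]
      have e3 : ∀ j, g j * b j (Io.symm ⟨i, hi⟩) * V j c
          = ∑ m, g j * b j (Io.symm ⟨i, hi⟩) * b j m * C m c := by
        intro j
        rw [hVC j c, Finset.mul_sum]
        apply Finset.sum_congr rfl
        intro m _
        ring
      rw [Finset.sum_congr rfl fun j _ => e3 j, Finset.sum_comm]
      apply Finset.sum_congr rfl
      intro m _
      rw [← Finset.sum_mul]
      congr 1
      exact hHg _ m
    · have hLHS : ∑ j, LA i j * MA j c = MA i c := by
        have hterm : ∀ j, LA i j * MA j c = if i = j then MA j c else 0 := by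
          intro j
          rw [hLA]
          simp only [Matrix.of_apply, dif_neg hi]
          split_ifs with h
          · rw [one_mul]
          · rw [zero_mul]
        rw [Finset.sum_congr rfl fun j _ => hterm j, Finset.sum_ite_eq, if_pos (Finset.mem_univ i)]
      rw [hLHS, hMA' i c, hVC i c]
      have hRj : ∀ j, FA i j * N2 j c
          = (if h : j ∈ I then b i (Io.symm ⟨j, h⟩) * C (Io.symm ⟨j, h⟩) c else 0)
            + (if i = j then -(g i)⁻¹ * W j c else 0) := by
        intro j
        by_cases hj : j ∈ I
        · rw [hFA, hN2]
          simp only [Matrix.of_apply, dif_neg hi, dif_pos hj]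
          have : i ≠ j := fun h => hi (h ▸ hj)
          rw [if_neg this, add_zero]
        · rw [hFA, hN2]
          simp only [Matrix.of_apply, dif_neg hi, dif_neg hj]
          by_cases hij : i = j
          · rw [if_pos hij, if_pos hij, zero_add, neg_mul]
          · rw [if_neg hij, if_neg hij, zero_mul, add_zero]
      rw [Finset.sum_congr rfl fun j _ => hRj j, Finset.sum_add_distrib,
        hsum_dite (fun m => b i m * C m c)]
      simp [sub_eq_add_neg]

  have IB : LB * MB = FB * N2 := by
    ext i c
    rw [Matrix.mul_apply, Matrix.mul_apply]
    by_cases hi : i ∈ I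
    · have hRHS : ∑ j, FB i j * N2 j c
          = ∑ m, -K (Io.symm ⟨i, hi⟩) m * C m c := by
        rw [← hsum_dite (fun m => -K (Io.symm ⟨i, hi⟩) m * C m c)]
        apply Finset.sum_congr rfl
        intro j _
        by_cases hj : j ∈ I
        · rw [hFB, hN2]
          simp only [Matrix.of_apply, dif_pos hi, dif_pos hj]
        · rw [hFB, hN2]
          simp only [Matrix.of_apply, dif_pos hi, dif_neg hj, zero_mul]
      rw [hRHS]
      have hLj : ∀ j, LB i j * MB j c
          = (if j ∈ I then -(g j) * b j (Io.symm ⟨i, hi⟩) * V j c else 0)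
            + b j (Io.symm ⟨i, hi⟩) * W j c := by
        intro j
        rw [hLB, hMB]
        simp only [Matrix.of_apply, dif_pos hi]
        by_cases hj : j ∈ I
        · rw [if_pos hj, if_pos hj, if_pos hj, hMA' j c]
          have hgj := hg j
          field_simp
          ring
        · rw [if_neg hj, if_neg hj, if_neg hj, zero_add]
          rfl
      rw [Finset.sum_congr rfl fun j _ => hLj j, Finset.sum_add_distrib,
        hBW c (Io.symm ⟨i, hi⟩), add_zero]
      rw [Finset.sum_ite_mem, Finset.univ_inter, hsum_I
        (fun j => -(g j) * b j (Io.symm ⟨i, hi⟩) * V j c)]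
      have e3 : ∀ m', -(g ((Io m' : Fin n))) * b (Io m' : Fin n) (Io.symm ⟨i, hi⟩) * V (Io m' : Fin n) c
          = ∑ m, -(g (Io m' : Fin n)) * b (Io m' : Fin n) (Io.symm ⟨i, hi⟩) * b (Io m' : Fin n) m * C m c := by
        intro m'
        rw [hVC _ c, Finset.mul_sum]
        apply Finset.sum_congr rfl
        intro m _
        ring
      rw [Finset.sum_congr rfl fun m' _ => e3 m', Finset.sum_comm]
      apply Finset.sum_congr rfl
      intro m _
      rw [← Finset.sum_mul]
      congr 1
      rw [hK]
      simp only [Matrix.of_apply]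
      rw [hsum_I (fun j => g j * b j (Io.symm ⟨i, hi⟩) * b j m), ← Finset.sum_neg_distrib]
      apply Finset.sum_congr rfl
      intro m' _
      ring
    · have hLHS : ∑ j, LB i j * MB j c = MB i c := by
        have hterm : ∀ j, LB i j * MB j c = if i = j then MB j c else 0 := by
          intro j
          rw [hLB]
          simp only [Matrix.of_apply, dif_neg hi]
          split_ifs with h
          · rw [one_mul]
          · rw [zero_mul]
        rw [Finset.sum_congr rfl fun j _ => hterm j, Finset.sum_ite_eq, if_pos (Finset.mem_univ i)]
      have hRHS : ∑ j, FB i j * N2 j c = N2 i c := by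
        have hterm : ∀ j, FB i j * N2 j c = if i = j then N2 j c else 0 := by
          intro j
          rw [hFB]
          simp only [Matrix.of_apply, dif_neg hi]
          split_ifs with h
          · rw [one_mul]
          · rw [zero_mul]
        rw [Finset.sum_congr rfl fun j _ => hterm j, Finset.sum_ite_eq, if_pos (Finset.mem_univ i)]
      rw [hLHS, hRHS, hMB, if_neg hi, hN2]
      simp only [Matrix.of_apply, dif_neg hi]
      rfl

  set d : ℂ := (Matrix.of fun i l : Fin k => b ((Io l : Fin n)) i).det with hd
  set e : (Fin k ⊕ {x : Fin n // x ∉ I}) ≃ Fin n :=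
    (Equiv.sumCongr Io.toEquiv (Equiv.refl _)).trans (Equiv.sumCompl (· ∈ I)) with he
  have he1 : ∀ l, e (Sum.inl l) = (Io l : Fin n) := fun l => rfl
  have he2 : ∀ x, e (Sum.inr x) = ↑x := fun x => rfl
  have hdetLA : LA.det = (∏ j ∈ I, g j) * d := by
    rw [← Matrix.det_submatrix_equiv_self e LA]
    have hblock : LA.submatrix e e = Matrix.fromBlocks
        (Matrix.of fun l m : Fin k => g (Io m : Fin n) * b (Io m : Fin n) l)
        (Matrix.of fun (l : Fin k) (x : {x : Fin n // x ∉ I}) => g ↑x * b ↑x l)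
        0 1 := by
      ext li lj
      rcases li with l | x <;> rcases lj with m | y
      · simp only [Matrix.submatrix_apply, he1, hLA, Matrix.of_apply,
          Matrix.fromBlocks_apply₁₁, dif_pos (Io l).2, Subtype.coe_eta,
          OrderIso.symm_apply_apply]
      · simp only [Matrix.submatrix_apply, he1, he2, hLA, Matrix.of_apply,
          Matrix.fromBlocks_apply₁₂, dif_pos (Io l).2, Subtype.coe_eta,
          OrderIso.symm_apply_apply]
      · simp only [Matrix.submatrix_apply, he1, he2, hLA, Matrix.of_apply,
          Matrix.fromBlocks_apply₂₁, dif_neg x.2, Matrix.zero_apply]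
        rw [if_neg (show ¬ (x : Fin n) = ↑(Io m) from fun hh => x.2 (by rw [hh]; exact (Io m).2))]
      · simp only [Matrix.submatrix_apply, he2, hLA, Matrix.of_apply,
          Matrix.fromBlocks_apply₂₂, dif_neg x.2, Matrix.one_apply]
        by_cases hxy : x = y
        · rw [if_pos (congrArg Subtype.val hxy), if_pos hxy]
        · rw [if_neg (fun hh => hxy (Subtype.ext hh)), if_neg hxy]
    rw [hblock, Matrix.det_fromBlocks_zero₂₁, Matrix.det_one, mul_one,
      Matrix.det_mul_row (fun m => g (Io m : Fin n)) (fun l m => b (Io m : Fin n) l), prod_Io g]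
    rfl
  have hdetLB : LB.det = ((-1) ^ k * ∏ j ∈ I, g j) * d := by
    rw [← Matrix.det_submatrix_equiv_self e LB]
    have hblock : LB.submatrix e e = Matrix.fromBlocks
        (Matrix.of fun l m : Fin k => -(g (Io m : Fin n)) * b (Io m : Fin n) l)
        (Matrix.of fun (l : Fin k) (x : {x : Fin n // x ∉ I}) => b ↑x l)
        0 1 := by
      ext li lj
      rcases li with l | x <;> rcases lj with m | y
      · simp only [Matrix.submatrix_apply, he1, hLB, Matrix.of_apply,
          Matrix.fromBlocks_apply₁₁, dif_pos (Io l).2, if_pos (Io m).2, Subtype.coe_eta,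
          OrderIso.symm_apply_apply]
      · simp only [Matrix.submatrix_apply, he1, he2, hLB, Matrix.of_apply,
          Matrix.fromBlocks_apply₁₂, dif_pos (Io l).2, Subtype.coe_eta,
          OrderIso.symm_apply_apply]
        rw [if_neg y.2]
      · simp only [Matrix.submatrix_apply, he1, he2, hLB, Matrix.of_apply,
          Matrix.fromBlocks_apply₂₁, dif_neg x.2, Matrix.zero_apply]
        rw [if_neg (show ¬ (x : Fin n) = ↑(Io m) from fun hh => x.2 (by rw [hh]; exact (Io m).2))]
      · simp only [Matrix.submatrix_apply, he2, hLB, Matrix.of_apply,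
          Matrix.fromBlocks_apply₂₂, dif_neg x.2, Matrix.one_apply]
        by_cases hxy : x = y
        · rw [if_pos (congrArg Subtype.val hxy), if_pos hxy]
        · rw [if_neg (fun hh => hxy (Subtype.ext hh)), if_neg hxy]
    rw [hblock, Matrix.det_fromBlocks_zero₂₁, Matrix.det_one, mul_one,
      Matrix.det_mul_row (fun m => -(g (Io m : Fin n))) (fun l m => b (Io m : Fin n) l)]
    have hv : ∏ m : Fin k, -(g ((Io m : Fin n))) = (-1) ^ k * ∏ j ∈ I, g j := by
      rw [← prod_Io g]
      rw [Finset.prod_congr rfl (fun m _ => (neg_eq_neg_one_mul (g ((Io m : Fin n)))))]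
      rw [Finset.prod_mul_distrib, Finset.prod_const, Finset.card_univ, Fintype.card_fin]
    rw [hv]
    rfl
  have hdetFA : FA.det = ((-1) ^ k * H.det) * ∏ x : {x : Fin n // x ∉ I}, -(g ↑x)⁻¹ := by
    rw [← Matrix.det_submatrix_equiv_self e FA]
    have hblock : FA.submatrix e e = Matrix.fromBlocks
        (-H) 0
        (Matrix.of fun (x : {x : Fin n // x ∉ I}) (m : Fin k) => b ↑x m)
        (Matrix.diagonal fun x : {x : Fin n // x ∉ I} => -(g ↑x)⁻¹) := by
      ext li lj
      rcases li with l | x <;> rcases lj with m | y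
      · simp only [Matrix.submatrix_apply, he1, hFA, Matrix.of_apply,
          Matrix.fromBlocks_apply₁₁, dif_pos (Io l).2, dif_pos (Io m).2, Subtype.coe_eta,
          OrderIso.symm_apply_apply, Matrix.neg_apply]
      · simp only [Matrix.submatrix_apply, he1, he2, hFA, Matrix.of_apply,
          Matrix.fromBlocks_apply₁₂, dif_pos (Io l).2, dif_neg y.2, Matrix.zero_apply]
      · simp only [Matrix.submatrix_apply, he1, he2, hFA, Matrix.of_apply,
          Matrix.fromBlocks_apply₂₁, dif_neg x.2, dif_pos (Io m).2, Subtype.coe_eta,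
          OrderIso.symm_apply_apply]
      · simp only [Matrix.submatrix_apply, he2, hFA, Matrix.of_apply,
          Matrix.fromBlocks_apply₂₂, dif_neg x.2, dif_neg y.2, Matrix.diagonal_apply]
        by_cases hxy : x = y
        · rw [if_pos hxy, if_pos (congrArg _ hxy)]
        · rw [if_neg hxy, if_neg (fun hh => hxy (Subtype.ext hh))]
    rw [hblock, Matrix.det_fromBlocks_zero₁₂, Matrix.det_neg, Fintype.card_fin,
      Matrix.det_diagonal]
  have hdetFB : FB.det = (-1) ^ k * K.det := by
    rw [← Matrix.det_submatrix_equiv_self e FB]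
    have hblock : FB.submatrix e e = Matrix.fromBlocks (-K) 0 0 1 := by
      ext li lj
      rcases li with l | x <;> rcases lj with m | y
      · simp only [Matrix.submatrix_apply, he1, hFB, Matrix.of_apply,
          Matrix.fromBlocks_apply₁₁, dif_pos (Io l).2, dif_pos (Io m).2, Subtype.coe_eta,
          OrderIso.symm_apply_apply, Matrix.neg_apply]
      · simp only [Matrix.submatrix_apply, he1, he2, hFB, Matrix.of_apply,
          Matrix.fromBlocks_apply₁₂, dif_pos (Io l).2, dif_neg y.2, Matrix.zero_apply]
      · simp only [Matrix.submatrix_apply, he1, he2, hFB, Matrix.of_apply,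
          Matrix.fromBlocks_apply₂₁, dif_neg x.2, Matrix.zero_apply]
        rw [if_neg (show ¬ (x : Fin n) = ↑(Io m) from fun hh => x.2 (by rw [hh]; exact (Io m).2))]
      · simp only [Matrix.submatrix_apply, he2, hFB, Matrix.of_apply,
          Matrix.fromBlocks_apply₂₂, dif_neg x.2, Matrix.one_apply]
        by_cases hxy : x = y
        · rw [if_pos (congrArg Subtype.val hxy), if_pos hxy]
        · rw [if_neg (fun hh => hxy (Subtype.ext hh)), if_neg hxy]
    rw [hblock, Matrix.det_fromBlocks_zero₁₂, Matrix.det_neg, Fintype.card_fin,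
      Matrix.det_one, mul_one]
  have hdetK : K.det = d * ((∏ j ∈ I, g j) * d) := by
    have hKmul : K = (Matrix.of fun (i : Fin k) (m : Fin k) => b (Io m : Fin n) i)
        * (Matrix.of fun (m : Fin k) (l : Fin k) => g (Io m : Fin n) * b (Io m : Fin n) l) := by
      ext i l
      rw [Matrix.mul_apply, hK]
      simp only [Matrix.of_apply]
      rw [hsum_I (fun j => g j * b j i * b j l)]
      apply Finset.sum_congr rfl
      intro m _
      ring
    rw [hKmul, Matrix.det_mul, Matrix.det_mul_column (fun m => g (Io m : Fin n)) (fun m l => b (Io m : Fin n) l), prod_Io g]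
    have hT : (Matrix.det fun (m l : Fin k) => b (Io m : Fin n) l) = d := by
      rw [hd, ← Matrix.det_transpose]
      rfl
    rw [hT]

  have E1 : LA.det * MA.det = FA.det * N2.det := by
    rw [← Matrix.det_mul, ← Matrix.det_mul, IA]
  have E2 : LB.det * MB.det = FB.det * N2.det := by
    rw [← Matrix.det_mul, ← Matrix.det_mul, IB]
  set A1 : ℂ := ∏ j ∈ I, g j with hA1def
  have hA1 : A1 ≠ 0 := Finset.prod_ne_zero_iff.mpr (fun j _ => hg j)
  set A2 : ℂ := ∏ j ∈ Iᶜ, g j with hA2def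
  set P2 : ℂ := ∏ x : {x : Fin n // x ∉ I}, -(g ↑x)⁻¹ with hP2def
  have hA2P2 : A2 * P2 = (-1) ^ (n - k) := by
    have hsub : P2 = ∏ j ∈ Iᶜ, -(g j)⁻¹ := by
      rw [hP2def]
      exact (Finset.prod_subtype Iᶜ (fun x => Finset.mem_compl) (fun j => -(g j)⁻¹)).symm
    rw [hsub, hA2def, ← Finset.prod_mul_distrib]
    have hc : ∀ j ∈ Iᶜ, g j * -(g j)⁻¹ = -1 := by
      intro j _
      have := hg j
      field_simp
    rw [Finset.prod_congr rfl hc, Finset.prod_const, Finset.card_compl, Fintype.card_fin, hI]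
  have hPall : A1 * A2 = ∏ j, g j := Finset.prod_mul_prod_compl I g
  have hd0 : d ≠ 0 := hdI
  have hMBN : MB.det = d * N2.det := by
    have h := E2
    rw [hdetLB, hdetFB, hdetK] at h
    have hne : ((-1 : ℂ) ^ k * A1) * d ≠ 0 :=
      mul_ne_zero (mul_ne_zero (pow_ne_zero _ (by norm_num)) hA1) hd0
    apply mul_left_cancel₀ hne
    exact h.trans (by ring)
  have E1' := E1
  rw [hdetLA, hdetFA] at E1'
  have hsplit : (-1 : ℂ) ^ k * (-1) ^ (n - k) = (-1) ^ n := by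
    rw [← pow_add, Nat.add_sub_cancel' hkn]
  have hsq : (-1 : ℂ) ^ n * (-1) ^ n = 1 := by
    rw [← pow_add]
    exact Even.neg_one_pow ⟨n, rfl⟩
  have hone : (-1 : ℂ) ^ n * ((-1) ^ k * (A2 * P2)) = 1 := by
    rw [hA2P2, hsplit, hsq]
  calc H.det * MB.det = H.det * (d * N2.det) := by rw [hMBN]
    _ = ((-1 : ℂ) ^ n * ((-1) ^ k * (A2 * P2))) * (H.det * (d * N2.det)) := by
        rw [hone, one_mul]
    _ = (-1 : ℂ) ^ n * d * A2 * ((((-1) ^ k * H.det) * P2) * N2.det) := by ring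
    _ = (-1 : ℂ) ^ n * d * A2 * ((A1 * d) * MA.det) := by rw [E1']
    _ = (-1 : ℂ) ^ n * d ^ 2 * MA.det * (A1 * A2) := by ring
    _ = (-1 : ℂ) ^ n * d ^ 2 * MA.det * ∏ j, g j := by rw [hPall]





end Helpers

/-- Under the diffeomorphism `pⱼ = aⱼ/fⱼ` of the critical set onto `L_{Y,a}`
(so `aⱼ/fⱼ² = pⱼ²/aⱼ`), the Hessian of the master function equals
`Hess = (−1)^k ∑_{|I|=k} d_I² ∏_{i∈I} pᵢ²/aᵢ`, and consequently, for any
`k`-subset `I` with `d_I ≠ 0`, `Hess = (−1)^n d_I² Jac_I ∏ⱼ pⱼ²/aⱼ` (written as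
`Hess · det MB = (−1)^n d_I² · det MA · ∏ⱼ pⱼ²/aⱼ`, where `Jac_I = det MA/det MB`
as in Theorem 4.4); in particular the ratio `Hess/(d_I² Jac_I) = (−1)^n ∏ pⱼ²/aⱼ`
never vanishes on `L_{Y,a}`. -/
theorem stmt_13 (n k : ℕ) (hkn : k ≤ n) (b : Fin n → Fin k → ℂ)
    (a p : Fin n → ℂ) (ha : ∀ j, a j ≠ 0) (hp : ∀ j, p j ≠ 0)
    (hpY : ∀ i, ∑ j, b j i * p j = 0)
    (I : Finset (Fin n)) (hI : I.card = k)
    (hdI : Matrix.det (Matrix.of fun i l : Fin k => b ((I.orderIsoOfFin hI) l).1 i) ≠ 0)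
    (u : (Fin n → ℂ) →ₗ[ℂ] ((Fin n → ℂ) × (Fin n → ℂ)))
    (hui : Function.Injective u)
    (hur : LinearMap.range u = (rowSpan n k b).prod (annSub n (rowSpan n k b)))
    (MA MB : Matrix (Fin n) (Fin n) ℂ)
    (hMA : ∀ i c, MA i c
      = (u (Pi.single c 1)).1 i - a i / (p i) ^ 2 * (u (Pi.single c 1)).2 i)
    (hMB : ∀ i c, MB i c = if i ∈ I then MA i c else (u (Pi.single c 1)).2 i)
    (hcoord : MB.det ≠ 0) :
    (Matrix.det (Matrix.of fun i l : Fin k => -(∑ j, b j i * b j l * (p j) ^ 2 / a j))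
        = (-1) ^ k *
          ∑ T ∈ (Finset.powersetCard k (Finset.univ : Finset (Fin n))).attach,
            (Matrix.det (Matrix.of fun i l : Fin k =>
                b ((T.1.orderIsoOfFin (Finset.mem_powersetCard.mp T.2).2) l).1 i)) ^ 2
              * ∏ i ∈ T.1, (p i) ^ 2 / a i) ∧
    (Matrix.det (Matrix.of fun i l : Fin k => -(∑ j, b j i * b j l * (p j) ^ 2 / a j))
        * MB.det
      = (-1) ^ n *
          (Matrix.det (Matrix.of fun i l : Fin k => b ((I.orderIsoOfFin hI) l).1 i)) ^ 2
          * MA.det * ∏ j, (p j) ^ 2 / a j) ∧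
    (∏ j, (p j) ^ 2 / a j) ≠ 0 := by
  refine ⟨part1 b a p, part2 n k hkn b a p ha hp I hI hdI u hur MA MB hMA hMB, ?_⟩
  exact Finset.prod_ne_zero_iff.mpr fun j _ => div_ne_zero (pow_ne_zero _ (hp j)) (ha j)

end Helpers
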